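/- Brocard angle formula. Let ABC be a nondegenerate triangle and let Ω be a point in the interior of the triangle (Ω ∈ interior (convexHull ℝ {A, B, C})) such that ∠ΩAB = ∠ΩBC = ∠ΩCA = ω for some real ω. Then cos ω / sin ω = cos(∠BAC)/sin(∠BAC) + cos(∠ABC)/sin(∠ABC) + cos(∠BCA)/sin(∠BCA), i.e. cot ω = cot A + cot B + cot C. -/

import Mathlib

noncomputable section

open EuclideanGeometry RealInnerProductSpace

namespace BrocardAux

abbrev E2 := EuclideanSpace ℝ (Fin 2)

def bcross (u v : E2) : ℝ := u 0 * v 1 - u 1 * v 0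

lemma binner_eq (u v : E2) : ⟪u, v⟫ = u 0 * v 0 + u 1 * v 1 := by
  simp [PiLp.inner_apply, Fin.sum_univ_two, RCLike.inner_apply, mul_comm]

lemma bnorm_sq (u : E2) : ‖u‖ ^ 2 = u 0 ^ 2 + u 1 ^ 2 := by
  rw [← real_inner_self_eq_norm_sq, binner_eq]; ring

lemma blagrange (u v : E2) : ⟪u, v⟫ ^ 2 + bcross u v ^ 2 = ‖u‖ ^ 2 * ‖v‖ ^ 2 := by
  rw [binner_eq, bnorm_sq, bnorm_sq, bcross]; ring

/-- The cotangent of the unoriented angle between two vectors equals inner product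
divided by the absolute value of the cross product. -/
lemma bcot_eq (u v : E2) (h : bcross u v ≠ 0) :
    Real.cos (InnerProductGeometry.angle u v) / Real.sin (InnerProductGeometry.angle u v) =
      ⟪u, v⟫ / |bcross u v| := by
  have hu : u ≠ 0 := by rintro rfl; simp [bcross] at h
  have hv : v ≠ 0 := by rintro rfl; simp [bcross] at h
  have hN : 0 < ‖u‖ * ‖v‖ := mul_pos (norm_pos_iff.2 hu) (norm_pos_iff.2 hv)
  have hsin : Real.sin (InnerProductGeometry.angle u v) * (‖u‖ * ‖v‖) = |bcross u v| := by
    rw [InnerProductGeometry.sin_angle_mul_norm_mul_norm,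
      real_inner_self_eq_norm_sq, real_inner_self_eq_norm_sq]
    have h2 : ‖u‖ ^ 2 * ‖v‖ ^ 2 - ⟪u, v⟫ * ⟪u, v⟫ = bcross u v ^ 2 := by
      have := blagrange u v; nlinarith [this]
    rw [h2, Real.sqrt_sq_eq_abs]
  have hcos := InnerProductGeometry.cos_angle_mul_norm_mul_norm u v
  rw [← mul_div_mul_right _ _ (ne_of_gt hN), hcos, hsin]

/-- Nondegenerate triangles have nonzero cross product. -/
lemma bcross_ne_zero (A B C : E2) (hT : AffineIndependent ℝ ![A, B, C]) :
    bcross (B - A) (C - A) ≠ 0 := by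
  intro hD
  rw [affineIndependent_iff_not_collinear_set] at hT
  apply hT
  by_cases hBA : B = A
  · subst hBA
    have : ({B, B, C} : Set E2) = {B, C} := by simp
    rw [this]
    exact collinear_pair ℝ B C
  rw [collinear_iff_of_mem (Set.mem_insert A {B, C})]
  refine ⟨B - A, ?_⟩
  intro p hp
  have hv : B - A ≠ 0 := sub_ne_zero.mpr hBA
  have hcomp : (B - A) 0 ≠ 0 ∨ (B - A) 1 ≠ 0 := by
    by_contra h
    push_neg at h
    apply hv
    ext i
    fin_cases i
    · simpa using h.1
    · simpa using h.2
  rcases hp with rfl | rfl | hp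
  · exact ⟨0, by simp⟩
  · exact ⟨1, by simp⟩
  · simp only [Set.mem_singleton_iff] at hp
    subst hp
    simp only [bcross, PiLp.sub_apply] at hD
    simp only [PiLp.sub_apply] at hcomp
    rcases hcomp with h0 | h1
    · refine ⟨(p 0 - A 0) / (B 0 - A 0), ?_⟩
      ext i
      fin_cases i
      · show p 0 = (p 0 - A 0) / (B 0 - A 0) * (B 0 - A 0) + A 0
        field_simp
        ring
      · show p 1 = (p 0 - A 0) / (B 0 - A 0) * (B 1 - A 1) + A 1
        field_simp
        linear_combination hD
    · refine ⟨(p 1 - A 1) / (B 1 - A 1), ?_⟩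
      ext i
      fin_cases i
      · show p 0 = (p 1 - A 1) / (B 1 - A 1) * (B 0 - A 0) + A 0
        field_simp
        linear_combination -hD
      · show p 1 = (p 1 - A 1) / (B 1 - A 1) * (B 1 - A 1) + A 1
        field_simp
        ring

/-- Interior points have positive barycentric coordinates. -/
lemma interior_coords (A B C Ω : E2) (hT : AffineIndependent ℝ ![A, B, C])
    (hΩ : Ω ∈ interior (convexHull ℝ {A, B, C})) :
    ∃ a b c : ℝ, 0 < a ∧ 0 < b ∧ 0 < c ∧ a + b + c = 1 ∧
      (Ω 0 = a * A 0 + b * B 0 + c * C 0) ∧ (Ω 1 = a * A 1 + b * B 1 + c * C 1) := by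
  have htop : affineSpan ℝ (Set.range ![A, B, C]) = ⊤ := by
    rw [hT.affineSpan_eq_top_iff_card_eq_finrank_add_one]
    simp [finrank_euclideanSpace_fin]
  let b : AffineBasis (Fin 3) ℝ E2 := ⟨![A, B, C], hT, htop⟩
  have hrange : Set.range ⇑b = ({A, B, C} : Set E2) := by
    show Set.range ![A, B, C] = _
    ext x
    simp [Fin.exists_fin_succ, Matrix.cons_val_zero, Matrix.cons_val_one]
    tauto
  have hpos : ∀ i, 0 < b.coord i Ω := by
    have h := b.interior_convexHull
    rw [hrange] at h
    rw [h] at hΩ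
    exact hΩ
  have hdec := b.linear_combination_coord_eq_self Ω
  rw [Fin.sum_univ_three] at hdec
  have hbcoe : ⇑b = ![A, B, C] := rfl
  refine ⟨b.coord 0 Ω, b.coord 1 Ω, b.coord 2 Ω, hpos 0, hpos 1, hpos 2, ?_, ?_, ?_⟩
  · have := b.sum_coord_apply_eq_one Ω
    rw [Fin.sum_univ_three] at this; exact this
  · have h0 := congrArg (fun f : E2 => f 0) hdec
    simpa [hbcoe, PiLp.smul_apply, PiLp.add_apply, smul_eq_mul] using h0.symm
  · have h1 := congrArg (fun f : E2 => f 1) hdec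
    simpa [hbcoe, PiLp.smul_apply, PiLp.add_apply, smul_eq_mul] using h1.symm

end BrocardAux

open BrocardAux

/-- The Brocard angle formula: cot ω = cot A + cot B + cot C. -/
theorem brocard_angle_cot
    (A B C Ω : EuclideanSpace ℝ (Fin 2)) (ω : ℝ)
    (hT : AffineIndependent ℝ ![A, B, C])
    (hΩ : Ω ∈ interior (convexHull ℝ {A, B, C}))
    (h₁ : ∠ Ω A B = ω) (h₂ : ∠ Ω B C = ω) (h₃ : ∠ Ω C A = ω) :
    Real.cos ω / Real.sin ω =
      Real.cos (∠ B A C) / Real.sin (∠ B A C) +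
      Real.cos (∠ A B C) / Real.sin (∠ A B C) +
      Real.cos (∠ B C A) / Real.sin (∠ B C A) := by
  obtain ⟨a, b, c, ha, hb, hc, hsum, hΩ0, hΩ1⟩ := interior_coords A B C Ω hT hΩ
  have ha' : a = 1 - b - c := by linarith
  subst ha'
  have hD : bcross (B - A) (C - A) ≠ 0 := bcross_ne_zero A B C hT
  set D : ℝ := bcross (B - A) (C - A) with hDdef
  have hK : 0 < |D| := abs_pos.mpr hD
  -- cross product identities
  have c1 : bcross (Ω - A) (B - A) = -c * D := by
    simp only [hDdef, bcross, PiLp.sub_apply]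
    rw [hΩ0, hΩ1]; ring
  have c2 : bcross (Ω - B) (C - B) = -(1 - b - c) * D := by
    simp only [hDdef, bcross, PiLp.sub_apply]
    rw [hΩ0, hΩ1]; ring
  have c3 : bcross (Ω - C) (A - C) = -b * D := by
    simp only [hDdef, bcross, PiLp.sub_apply]
    rw [hΩ0, hΩ1]; ring
  have cB : bcross (A - B) (C - B) = -D := by
    simp only [hDdef, bcross, PiLp.sub_apply]; ring
  have cC : bcross (B - C) (A - C) = -D := by
    simp only [hDdef, bcross, PiLp.sub_apply]; ring
  -- the angle between points is the angle between difference vectors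
  have hang : ∀ P Q R : E2, ∠ P Q R = InnerProductGeometry.angle (P - Q) (R - Q) :=
    fun _ _ _ => rfl
  -- cotangent expressions
  have e1 : Real.cos ω / Real.sin ω = ⟪Ω - A, B - A⟫ / (c * |D|) := by
    rw [← h₁, hang, bcot_eq _ _ (by rw [c1]; exact mul_ne_zero (neg_ne_zero.mpr (ne_of_gt hc)) hD),
      c1, abs_mul, abs_neg, abs_of_pos hc]
  have e2 : Real.cos ω / Real.sin ω = ⟪Ω - B, C - B⟫ / ((1 - b - c) * |D|) := by
    rw [← h₂, hang, bcot_eq _ _ (by rw [c2]; exact mul_ne_zero (neg_ne_zero.mpr (ne_of_gt ha)) hD),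
      c2, abs_mul, abs_neg, abs_of_pos ha]
  have e3 : Real.cos ω / Real.sin ω = ⟪Ω - C, A - C⟫ / (b * |D|) := by
    rw [← h₃, hang, bcot_eq _ _ (by rw [c3]; exact mul_ne_zero (neg_ne_zero.mpr (ne_of_gt hb)) hD),
      c3, abs_mul, abs_neg, abs_of_pos hb]
  have r1 : Real.cos (∠ B A C) / Real.sin (∠ B A C) = ⟪B - A, C - A⟫ / |D| := by
    rw [hang, bcot_eq _ _ hD]
  have r2 : Real.cos (∠ A B C) / Real.sin (∠ A B C) = ⟪A - B, C - B⟫ / |D| := by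
    rw [hang, bcot_eq _ _ (by rw [cB]; exact neg_ne_zero.mpr hD), cB, abs_neg]
  have r3 : Real.cos (∠ B C A) / Real.sin (∠ B C A) = ⟪B - C, A - C⟫ / |D| := by
    rw [hang, bcot_eq _ _ (by rw [cC]; exact neg_ne_zero.mpr hD), cC, abs_neg]
  -- the telescoping inner product identity
  have hinner : ⟪Ω - A, B - A⟫ + ⟪Ω - B, C - B⟫ + ⟪Ω - C, A - C⟫ =
      ⟪B - A, C - A⟫ + ⟪A - B, C - B⟫ + ⟪B - C, A - C⟫ := by
    simp only [binner_eq, PiLp.sub_apply]; ring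
  -- extract the products
  have p1 : ⟪Ω - A, B - A⟫ = Real.cos ω / Real.sin ω * (c * |D|) :=
    ((div_eq_iff (by positivity)).mp e1.symm)
  have p2 : ⟪Ω - B, C - B⟫ = Real.cos ω / Real.sin ω * ((1 - b - c) * |D|) :=
    ((div_eq_iff (by positivity)).mp e2.symm)
  have p3 : ⟪Ω - C, A - C⟫ = Real.cos ω / Real.sin ω * (b * |D|) :=
    ((div_eq_iff (by positivity)).mp e3.symm)
  rw [r1, r2, r3, ← add_div, ← add_div, ← hinner, p1, p2, p3]
  have hx : Real.cos ω / Real.sin ω * (c * |D|) +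
      Real.cos ω / Real.sin ω * ((1 - b - c) * |D|) +
      Real.cos ω / Real.sin ω * (b * |D|) = Real.cos ω / Real.sin ω * |D| := by ring
  rw [hx, mul_div_assoc, div_self (ne_of_gt hK), mul_one]
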